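/- arXiv:1506.01773 — 4 statements merged into one kernel-verified Lean document; each statement's English description precedes it below -/
import Mathlib

section
/- Let K be an s×t complex matrix such that for every diagonal positive semidefinite t×t matrix δ_a with trace 1, the matrix K δ_a K† is diagonal. Then every column of K contains at most one nonzero entry. -/
open Matrix ComplexOrder

/-- If an `s × t` complex matrix `K` maps every diagonal positive semidefinite
trace-one matrix `δ` to a diagonal matrix under `δ ↦ K δ Kᴴ`, then every column of `K`
contains at most one nonzero entry. -/
theorem incoherent_kraus_column_structure {s t : ℕ} (K : Matrix (Fin s) (Fin t) ℂ)
    (hK : ∀ δ : Matrix (Fin t) (Fin t) ℂ,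
      (∀ i j : Fin t, i ≠ j → δ i j = 0) → δ.PosSemidef → δ.trace = 1 →
      ∀ i m : Fin s, i ≠ m → (K * δ * Kᴴ) i m = 0) :
    ∀ j : Fin t, ∀ i m : Fin s, K i j ≠ 0 → K m j ≠ 0 → i = m := by
  intro j i m hi hm
  by_contra him
  set d : Fin t → ℂ := fun k => if k = j then 1 else 0 with hd
  have h1 : ∀ a b : Fin t, a ≠ b → (Matrix.diagonal d) a b = 0 := by
    intro a b hab; simp [Matrix.diagonal_apply_ne _ hab]
  have h2 : (Matrix.diagonal d).PosSemidef := by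
    apply Matrix.posSemidef_diagonal_iff.mpr
    intro k; by_cases h : k = j <;> simp [hd, h]
  have h3 : (Matrix.diagonal d).trace = 1 := by
    simp [Matrix.trace_diagonal, hd]
  have h4 := hK (Matrix.diagonal d) h1 h2 h3 i m him
  have hcalc : (K * Matrix.diagonal d * Kᴴ) i m = K i j * star (K m j) := by
    simp [Matrix.mul_apply, Matrix.diagonal_apply, hd, Finset.sum_ite_eq',
      Matrix.conjTranspose_apply, mul_ite, ite_mul]
  rw [hcalc] at h4
  exact mul_ne_zero hi (star_ne_zero.mpr hm) h4
end

section
/- The basis-free coherence C^free(ρ) := min over local (tensor product) unitaries U of C(UρU†) equals the relative entropy of discord D(ρ) := min over product orthonormal bases B of [H(B,ρ) − S(ρ)], where H(B,ρ) = −Σ_k ⟨B_k|ρ|B_k⟩ log⟨B_k|ρ|B_k⟩ is the Shannon entropy of the measurement of ρ in basis B. -/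
open Matrix ComplexOrder

variable {N : ℕ} {d : Fin N → ℕ}

/-- The von Neumann entropy via eigenvalues (0 if not Hermitian). -/
noncomputable def vnEnt {ι : Type} [Fintype ι] [DecidableEq ι] (ρ : Matrix ι ι ℂ) : ℝ :=
  if h : ρ.IsHermitian then ∑ i, Real.negMulLog (h.eigenvalues i) else 0

/-- Relative entropy of coherence `C(σ) = S(σ_I) - S(σ)` in the fixed (product) basis. -/
noncomputable def cohRE {ι : Type} [Fintype ι] [DecidableEq ι] (σ : Matrix ι ι ℂ) : ℝ :=
  vnEnt (Matrix.diagonal (fun k => σ k k)) - vnEnt σ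

/-- The Kronecker (tensor) product of a family of local operators, acting on the
multipartite index `∀ i, Fin (d i)`. -/
noncomputable def kron (U : ∀ i, Matrix (Fin (d i)) (Fin (d i)) ℂ) :
    Matrix (∀ i, Fin (d i)) (∀ i, Fin (d i)) ℂ :=
  fun k l => ∏ i, U i (k i) (l i)

/-- The product orthonormal basis vector `|B(k⃗)⟩` obtained from a family `V` of local unitaries:
its components are products of the columns of the `V i`. -/
noncomputable def basisVec (V : ∀ i, Matrix (Fin (d i)) (Fin (d i)) ℂ)
    (k : ∀ i, Fin (d i)) : (∀ i, Fin (d i)) → ℂ :=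
  fun l => ∏ i, V i (l i) (k i)

section Aux

open Polynomial

variable {n : Type} [Fintype n] [DecidableEq n]

lemma charpoly_diag (v : n → ℂ) :
    (Matrix.diagonal v).charpoly = ∏ i, (X - C (v i)) := by
  have h : charmatrix (Matrix.diagonal v) = Matrix.diagonal (fun i => X - C (v i)) := by
    ext i j
    by_cases hij : i = j <;>
      simp [charmatrix_apply, Matrix.diagonal_apply, hij]
  rw [Matrix.charpoly, h, Matrix.det_diagonal]

lemma charpoly_unitary_conj (U M : Matrix n n ℂ) (hU : U ∈ Matrix.unitaryGroup n ℂ) :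
    (U * M * Uᴴ).charpoly = M.charpoly := by
  have h1 : Uᴴ * U = 1 := Matrix.UnitaryGroup.star_mul_self ⟨U, hU⟩
  have h2 : U * Uᴴ = 1 := Matrix.mem_unitaryGroup_iff.mp hU
  have hc : charmatrix (U * M * Uᴴ) =
      (C : ℂ →+* ℂ[X]).mapMatrix U * charmatrix M * (C : ℂ →+* ℂ[X]).mapMatrix Uᴴ := by
    simp only [charmatrix, mul_sub, sub_mul, _root_.map_mul]
    congr 1
    rw [Matrix.scalar_apply, ← Matrix.smul_one_eq_diagonal, Matrix.mul_smul, Matrix.smul_mul,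
      mul_one, ← _root_.map_mul, h2, _root_.map_one]
  rw [Matrix.charpoly, hc, Matrix.det_mul, Matrix.det_mul, Matrix.charpoly,
    mul_comm, ← mul_assoc, ← Matrix.det_mul, ← _root_.map_mul (RingHom.mapMatrix C) Uᴴ U, h1]
  simp

lemma hermitian_charpoly {A : Matrix n n ℂ} (hA : A.IsHermitian) :
    A.charpoly = ∏ i, (X - C ((hA.eigenvalues i : ℝ) : ℂ)) := by
  conv_lhs => rw [hA.spectral_theorem]
  rw [Unitary.conjStarAlgAut_apply, Matrix.star_eq_conjTranspose,
    charpoly_unitary_conj _ _ (hA.eigenvectorUnitary).2, charpoly_diag]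
  rfl

lemma sum_negMulLog_eq (a b : n → ℝ)
    (h : ∏ i, (X - C ((a i : ℂ))) = ∏ i, (X - C ((b i : ℂ)))) :
    ∑ i, Real.negMulLog (a i) = ∑ i, Real.negMulLog (b i) := by
  have key : Multiset.map (fun i => (a i : ℂ)) Finset.univ.val
      = Multiset.map (fun i => (b i : ℂ)) Finset.univ.val := by
    have ha := Polynomial.roots_multiset_prod_X_sub_C
      (Multiset.map (fun i => (a i : ℂ)) Finset.univ.val)
    have hb := Polynomial.roots_multiset_prod_X_sub_C
      (Multiset.map (fun i => (b i : ℂ)) Finset.univ.val)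
    rw [Multiset.map_map] at ha hb
    rw [← ha, ← hb]
    congr 1
  calc ∑ i, Real.negMulLog (a i)
      = (Multiset.map (fun z : ℂ => Real.negMulLog z.re)
          (Multiset.map (fun i => (a i : ℂ)) Finset.univ.val)).sum := by
        rw [Multiset.map_map, Finset.sum_eq_multiset_sum]
        simp only [Function.comp_def, Complex.ofReal_re]
    _ = (Multiset.map (fun z : ℂ => Real.negMulLog z.re)
          (Multiset.map (fun i => (b i : ℂ)) Finset.univ.val)).sum := by rw [key]
    _ = ∑ i, Real.negMulLog (b i) := by
        rw [Multiset.map_map, Finset.sum_eq_multiset_sum]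
        simp only [Function.comp_def, Complex.ofReal_re]

lemma vnEnt_eq_of_charpoly {A B : Matrix n n ℂ} (hA : A.IsHermitian) (hB : B.IsHermitian)
    (h : A.charpoly = B.charpoly) : vnEnt A = vnEnt B := by
  rw [vnEnt, vnEnt, dif_pos hA, dif_pos hB]
  exact sum_negMulLog_eq _ _ (by rw [← hermitian_charpoly hA, ← hermitian_charpoly hB, h])

lemma vnEnt_diag_real (r : n → ℝ) :
    vnEnt (Matrix.diagonal (fun i => (r i : ℂ))) = ∑ i, Real.negMulLog (r i) := by
  have hD : (Matrix.diagonal (fun i => (r i : ℂ))).IsHermitian := by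
    rw [Matrix.isHermitian_diagonal_iff]
    intro i
    show star ((r i : ℂ)) = (r i : ℂ)
    exact Complex.conj_ofReal (r i)
  rw [vnEnt, dif_pos hD]
  exact sum_negMulLog_eq _ _ (by rw [← hermitian_charpoly hD, charpoly_diag])

end Aux

section KronAux

lemma kron_mul (A B : ∀ i, Matrix (Fin (d i)) (Fin (d i)) ℂ) :
    kron (fun i => A i * B i) = kron A * kron B := by
  ext k l
  rw [Matrix.mul_apply]
  simp only [kron, Matrix.mul_apply]
  rw [Finset.prod_univ_sum (fun _ => Finset.univ) (fun i j => A i (k i) j * B i j (l i)),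
    Fintype.piFinset_univ]
  refine Finset.sum_congr rfl fun m _ => ?_
  rw [← Finset.prod_mul_distrib]

lemma kron_conjTranspose (A : ∀ i, Matrix (Fin (d i)) (Fin (d i)) ℂ) :
    (kron A)ᴴ = kron (fun i => (A i)ᴴ) := by
  ext k l
  simp [kron, Matrix.conjTranspose_apply, map_prod]

lemma kron_one : (kron (fun i => (1 : Matrix (Fin (d i)) (Fin (d i)) ℂ))) = 1 := by
  ext k l
  by_cases h : k = l
  · subst h; simp [kron, Matrix.one_apply]
  · have : ∃ i, k i ≠ l i := by
      by_contra hc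
      push_neg at hc
      exact h (funext hc)
    obtain ⟨i, hi⟩ := this
    rw [kron, Matrix.one_apply_ne h]
    exact Finset.prod_eq_zero (Finset.mem_univ i) (Matrix.one_apply_ne hi)

lemma kron_unitary (U : ∀ i, Matrix (Fin (d i)) (Fin (d i)) ℂ)
    (hU : ∀ i, U i ∈ Matrix.unitaryGroup (Fin (d i)) ℂ) :
    kron U ∈ Matrix.unitaryGroup (∀ i, Fin (d i)) ℂ := by
  rw [Matrix.mem_unitaryGroup_iff]
  rw [Matrix.star_eq_conjTranspose, kron_conjTranspose, ← kron_mul]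
  have : (fun i => U i * (U i)ᴴ) = fun i => (1 : Matrix (Fin (d i)) (Fin (d i)) ℂ) := by
    funext i
    exact Matrix.mem_unitaryGroup_iff.mp (hU i)
  rw [this, kron_one]

end KronAux

lemma main_eq (ρ : Matrix (∀ i, Fin (d i)) (∀ i, Fin (d i)) ℂ) (hρ : ρ.PosSemidef)
    (U : ∀ i, Matrix (Fin (d i)) (Fin (d i)) ℂ)
    (hU : ∀ i, U i ∈ Matrix.unitaryGroup (Fin (d i)) ℂ) :
    cohRE (kron U * ρ * (kron U)ᴴ) =
      (∑ k : ∀ i, Fin (d i), Real.negMulLog ((star (basisVec (fun i => (U i)ᴴ) k) ⬝ᵥ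
        ρ.mulVec (basisVec (fun i => (U i)ᴴ) k)).re)) - vnEnt ρ := by
  set σ := kron U * ρ * (kron U)ᴴ with hσdef
  have hσ : σ.PosSemidef := hρ.mul_mul_conjTranspose_same (kron U)
  have hdiag : ∀ k, σ k k =
      star (basisVec (fun i => (U i)ᴴ) k) ⬝ᵥ ρ.mulVec (basisVec (fun i => (U i)ᴴ) k) := by
    intro k
    have hstar : star (basisVec (fun i => (U i)ᴴ) k) = fun l => kron U k l := by
      funext l
      simp only [Pi.star_apply, basisVec, kron, Matrix.conjTranspose_apply]
      rw [star_prod]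
      exact Finset.prod_congr rfl fun i _ => star_star _
    have hvec : ∀ l, basisVec (fun i => (U i)ᴴ) k l = (kron U)ᴴ l k := by
      intro l
      simp only [basisVec, Matrix.conjTranspose_apply, kron, star_prod]
    rw [hstar]
    simp only [dotProduct, Matrix.mulVec, dotProduct, hvec,
      hσdef, Matrix.mul_apply, Finset.sum_mul, Finset.mul_sum]
    rw [Finset.sum_comm]
    exact Finset.sum_congr rfl fun l _ => Finset.sum_congr rfl fun m _ => by ring
  have hreal : ∀ k, σ k k = (((σ k k).re : ℝ) : ℂ) := by
    intro k
    have := hσ.isHermitian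
    have h1 : star (σ k k) = σ k k := by
      conv_rhs => rw [← this]
      rw [Matrix.conjTranspose_apply]
    exact (Complex.conj_eq_iff_re.mp h1).symm
  have hD : Matrix.diagonal (fun k => σ k k)
      = Matrix.diagonal (fun k => (((σ k k).re : ℝ) : ℂ)) := by
    rw [show (fun k => σ k k) = fun k => (((σ k k).re : ℝ) : ℂ) from funext hreal]
  rw [cohRE, hD, vnEnt_diag_real,
    vnEnt_eq_of_charpoly hσ.isHermitian hρ.isHermitian
      (charpoly_unitary_conj (kron U) ρ (kron_unitary U hU))]
  congr 1
  exact Finset.sum_congr rfl fun k _ => by rw [hdiag k]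

/-- The basis-free coherence, i.e. the infimum of the relative entropy of
coherence `C(UρU†)` over all local (tensor product) unitaries `U = U₁⊗…⊗U_N`, equals the
relative entropy of discord, i.e. the infimum over all product orthonormal bases `B` of
`H(B,ρ) - S(ρ)`, where `H(B,ρ) = ∑_k negMulLog ⟨B(k⃗)|ρ|B(k⃗)⟩` is the Shannon entropy of
the measurement of `ρ` in the basis `B`. -/
theorem basisFree_coherence_eq_discord (ρ : Matrix (∀ i, Fin (d i)) (∀ i, Fin (d i)) ℂ)
    (hρ : ρ.PosSemidef) (htr : ρ.trace = 1) :
    sInf {x : ℝ | ∃ U : ∀ i, Matrix (Fin (d i)) (Fin (d i)) ℂ,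
        (∀ i, U i ∈ Matrix.unitaryGroup (Fin (d i)) ℂ) ∧
        x = cohRE (kron U * ρ * (kron U)ᴴ)} =
    sInf {x : ℝ | ∃ V : ∀ i, Matrix (Fin (d i)) (Fin (d i)) ℂ,
        (∀ i, V i ∈ Matrix.unitaryGroup (Fin (d i)) ℂ) ∧
        x = (∑ k : ∀ i, Fin (d i),
              Real.negMulLog ((star (basisVec V k) ⬝ᵥ ρ.mulVec (basisVec V k)).re))
            - vnEnt ρ} := by
  congr 1
  ext x
  simp only [Set.mem_setOf_eq]
  constructor
  · rintro ⟨U, hU, rfl⟩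
    exact ⟨fun i => (U i)ᴴ, fun i => Unitary.star_mem (hU i), main_eq ρ hρ U hU⟩
  · rintro ⟨V, hV, rfl⟩
    refine ⟨fun i => (V i)ᴴ, fun i => Unitary.star_mem (hV i), ?_⟩
    have := main_eq ρ hρ (fun i => (V i)ᴴ) (fun i => Unitary.star_mem (hV i))
    simpa [Matrix.conjTranspose_conjTranspose] using this.symm
end

section
/- Let 0 ≤ δ₁ ≤ δ₂ ≤ δ₃ ≤ δ₄ with Σδᵢ = 1, and define F(p) = h(pδ₁+(1−p)δ₃) + h(pδ₂+(1−p)δ₄) + h(pδ₃+(1−p)δ₁) + h(pδ₄+(1−p)δ₂) for p ∈ [0,1], where h(x) = −x log₂ x. Then F is maximized at p = 1/2, with maximum value 1 − (δ₁+δ₃)log₂(δ₁+δ₃) − (δ₂+δ₄)log₂(δ₂+δ₄). -/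
/-- `h(x) = -x log₂ x` (with `h(0) = 0`, using `Real.logb 2 0 = 0`). -/
noncomputable def h2 (x : ℝ) : ℝ := -(x * Real.logb 2 x)

lemma h2_concave_pair {x y : ℝ} (hx : 0 ≤ x) (hy : 0 ≤ y) :
    h2 x + h2 y ≤ 2 * h2 ((x + y) / 2) := by
  have hconv := Real.convexOn_mul_log
  have h := hconv.2 (Set.mem_Ici.mpr hx) (Set.mem_Ici.mpr hy)
      (by norm_num : (0:ℝ) ≤ 1/2) (by norm_num : (0:ℝ) ≤ 1/2) (by norm_num)
  simp only [smul_eq_mul] at h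
  have he : (1/2:ℝ) * x + (1/2) * y = (x + y) / 2 := by ring
  rw [he] at h
  have hlog2 : 0 < Real.log 2 := Real.log_pos (by norm_num)
  simp only [h2, Real.logb]
  calc -(x * (Real.log x / Real.log 2)) + -(y * (Real.log y / Real.log 2))
      = (-(x * Real.log x) + -(y * Real.log y)) / Real.log 2 := by ring
    _ ≤ (2 * -((x + y) / 2 * Real.log ((x + y) / 2))) / Real.log 2 := by
        gcongr
        linarith
    _ = 2 * -((x + y) / 2 * (Real.log ((x + y) / 2) / Real.log 2)) := by ring

lemma h2_half (x : ℝ) (hx : 0 ≤ x) : 2 * h2 (x / 2) = x - x * Real.logb 2 x := by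
  rcases hx.eq_or_lt with h | h
  · simp [h2, ← h]
  · have hl : Real.logb 2 (x / 2) = Real.logb 2 x - 1 := by
      rw [Real.logb_div h.ne' (by norm_num)]
      simp
    unfold h2
    rw [hl]
    ring

/-- For `0 ≤ δ₁ ≤ δ₂ ≤ δ₃ ≤ δ₄` with `δ₁+δ₂+δ₃+δ₄ = 1`, the function
`F(p) = h(pδ₁+(1−p)δ₃) + h(pδ₂+(1−p)δ₄) + h(pδ₃+(1−p)δ₁) + h(pδ₄+(1−p)δ₂)` on `[0,1]`
is maximized at `p = 1/2`, with maximum value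
`1 − (δ₁+δ₃)log₂(δ₁+δ₃) − (δ₂+δ₄)log₂(δ₂+δ₄)`. -/
theorem one_side_unitary_optimal_coherence (δ₁ δ₂ δ₃ δ₄ : ℝ)
    (h0 : 0 ≤ δ₁) (h12 : δ₁ ≤ δ₂) (h23 : δ₂ ≤ δ₃) (h34 : δ₃ ≤ δ₄)
    (hsum : δ₁ + δ₂ + δ₃ + δ₄ = 1)
    (F : ℝ → ℝ)
    (hF : ∀ p, F p = h2 (p * δ₁ + (1 - p) * δ₃) + h2 (p * δ₂ + (1 - p) * δ₄)
      + h2 (p * δ₃ + (1 - p) * δ₁) + h2 (p * δ₄ + (1 - p) * δ₂)) :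
    (∀ p ∈ Set.Icc (0 : ℝ) 1, F p ≤ F (1 / 2)) ∧
    F (1 / 2) = 1 - (δ₁ + δ₃) * Real.logb 2 (δ₁ + δ₃)
      - (δ₂ + δ₄) * Real.logb 2 (δ₂ + δ₄) := by
  have hd2 : 0 ≤ δ₂ := le_trans h0 h12
  have hd3 : 0 ≤ δ₃ := le_trans hd2 h23
  have hd4 : 0 ≤ δ₄ := le_trans hd3 h34
  have hFhalf : F (1/2) = 2 * h2 ((δ₁ + δ₃) / 2) + 2 * h2 ((δ₂ + δ₄) / 2) := by
    rw [hF]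
    have e1 : (1/2:ℝ) * δ₁ + (1 - 1/2) * δ₃ = (δ₁ + δ₃) / 2 := by ring
    have e2 : (1/2:ℝ) * δ₂ + (1 - 1/2) * δ₄ = (δ₂ + δ₄) / 2 := by ring
    have e3 : (1/2:ℝ) * δ₃ + (1 - 1/2) * δ₁ = (δ₁ + δ₃) / 2 := by ring
    have e4 : (1/2:ℝ) * δ₄ + (1 - 1/2) * δ₂ = (δ₂ + δ₄) / 2 := by ring
    rw [e1, e2, e3, e4]; ring
  constructor
  · intro p hp
    obtain ⟨hp0, hp1⟩ := hp
    have hp1' : 0 ≤ 1 - p := by linarith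
    have n1 : 0 ≤ p * δ₁ + (1 - p) * δ₃ := add_nonneg (mul_nonneg hp0 h0) (mul_nonneg hp1' hd3)
    have n2 : 0 ≤ p * δ₂ + (1 - p) * δ₄ := add_nonneg (mul_nonneg hp0 hd2) (mul_nonneg hp1' hd4)
    have n3 : 0 ≤ p * δ₃ + (1 - p) * δ₁ := add_nonneg (mul_nonneg hp0 hd3) (mul_nonneg hp1' h0)
    have n4 : 0 ≤ p * δ₄ + (1 - p) * δ₂ := add_nonneg (mul_nonneg hp0 hd4) (mul_nonneg hp1' hd2)
    have k1 := h2_concave_pair n1 n3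
    have k2 := h2_concave_pair n2 n4
    have r1 : (p * δ₁ + (1 - p) * δ₃ + (p * δ₃ + (1 - p) * δ₁)) / 2 = (δ₁ + δ₃) / 2 := by ring
    have r2 : (p * δ₂ + (1 - p) * δ₄ + (p * δ₄ + (1 - p) * δ₂)) / 2 = (δ₂ + δ₄) / 2 := by ring
    rw [r1] at k1
    rw [r2] at k2
    rw [hF p, hFhalf]
    linarith
  · rw [hFhalf, h2_half _ (add_nonneg h0 hd3), h2_half _ (add_nonneg hd2 hd4)]
    linarith
end

section
/- Let a = |α|², b = |β|², c = |γ|² be nonnegative reals with a + b + c = 1. Then (1−a)log₂(1−a) + (1−b)log₂(1−b) − c log₂ c ≤ 0, with the convention 0 log 0 = 0. Equivalently, for the generalized W state, C(ρ_AB) + C(ρ_AC) ≤ C(ρ_ABC). -/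
lemma convexOn_mul_logb : ConvexOn ℝ (Set.Ici 0) fun x : ℝ => x * Real.logb 2 x := by
  have h := Real.convexOn_mul_log.smul (c := (Real.log 2)⁻¹)
    (by positivity)
  convert h using 2 with x
  · rfl
  · rfl
  simp [Real.logb, div_eq_inv_mul, smul_eq_mul]
  ring

/-- For nonnegative reals `a, b, c` with `a + b + c = 1`,
`(1−a)log₂(1−a) + (1−b)log₂(1−b) − c log₂ c ≤ 0` (with the convention `0 log 0 = 0`,
as `Real.logb 2 0 = 0`). Equivalently, for the generalized W state the additivity
inequality `C(ρ_AB) + C(ρ_AC) ≤ C(ρ_ABC)` holds. -/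
theorem W_state_additivity (a b c : ℝ) (ha : 0 ≤ a) (hb : 0 ≤ b) (hc : 0 ≤ c)
    (hsum : a + b + c = 1) :
    (1 - a) * Real.logb 2 (1 - a) + (1 - b) * Real.logb 2 (1 - b)
      - c * Real.logb 2 c ≤ 0 := by
  set f : ℝ → ℝ := fun x => x * Real.logb 2 x with hf
  rcases eq_or_lt_of_le (by positivity : (0:ℝ) ≤ a + b) with hab | hab
  · have ha0 : a = 0 := by linarith [hb]
    have hb0 : b = 0 := by linarith [ha]
    have hc1 : c = 1 := by linarith
    simp [ha0, hb0, hc1]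
  · have hw1 : 0 ≤ a / (a + b) := by positivity
    have hw2 : 0 ≤ b / (a + b) := by positivity
    have hsum1 : a / (a + b) + b / (a + b) = 1 := by field_simp
    have hconv := convexOn_mul_logb
    have h1 := hconv.2 (Set.mem_Ici.mpr hc) (Set.mem_Ici.mpr zero_le_one) hw1 hw2 hsum1
    have h2 := hconv.2 (Set.mem_Ici.mpr hc) (Set.mem_Ici.mpr zero_le_one) hw2 hw1
      (by linarith)
    have e1 : a / (a + b) * c + b / (a + b) * 1 = 1 - a := by
      field_simp; nlinarith
    have e2 : b / (a + b) * c + a / (a + b) * 1 = 1 - b := by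
      field_simp; nlinarith
    simp only [smul_eq_mul] at h1 h2
    rw [e1] at h1
    rw [e2] at h2
    have hf1 : (fun x : ℝ => x * Real.logb 2 x) 1 = 0 := by simp
    have hsumf : (fun x : ℝ => x * Real.logb 2 x) (1-a)
        + (fun x : ℝ => x * Real.logb 2 x) (1-b)
        ≤ (fun x : ℝ => x * Real.logb 2 x) c := by
      calc _ ≤ (a / (a+b) + b / (a+b)) * (fun x : ℝ => x * Real.logb 2 x) c
            + (a / (a+b) + b / (a+b)) * (fun x : ℝ => x * Real.logb 2 x) 1 := by
              linarith
        _ = (fun x : ℝ => x * Real.logb 2 x) c := by rw [hsum1, hf1]; ring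
    simp only [hf] at *
    linarith [hsumf]
end
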